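/- Let V be a 4n-dimensional quaternion-Hermitian vector space and R an algebraic curvature tensor. The skew part of Ric^q(R) satisfies Σ_{A=I,J,K} A·(Ric^q)_a = -(Ric^q)_a, where (A·b)(x,y) = b(Ax, Ay). -/

import Mathlib

open scoped RealInnerProductSpace

section Aux

variable {V : Type*} [NormedAddCommGroup V] [InnerProductSpace ℝ V]
  {ι : Type*} [Fintype ι]

/-- contraction `S_A(a,b) = ∑ᵢ R(a, eᵢ, b, A eᵢ)` -/
noncomputable def Ssum (e : OrthonormalBasis ι ℝ V) (R : V →ₗ[ℝ] V →ₗ[ℝ] V →ₗ[ℝ] V →ₗ[ℝ] ℝ)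
    (A : V →ₗ[ℝ] V) (a b : V) : ℝ :=
  ∑ i, R a (e i) b (A (e i))

/-- contraction `C_A(a,b) = ∑ᵢ R(a, b, eᵢ, A eᵢ)` -/
noncomputable def Csum (e : OrthonormalBasis ι ℝ V) (R : V →ₗ[ℝ] V →ₗ[ℝ] V →ₗ[ℝ] V →ₗ[ℝ] ℝ)
    (A : V →ₗ[ℝ] V) (a b : V) : ℝ :=
  ∑ i, R a b (e i) (A (e i))

lemma expand_snd (e : OrthonormalBasis ι ℝ V) (R : V →ₗ[ℝ] V →ₗ[ℝ] V →ₗ[ℝ] V →ₗ[ℝ] ℝ)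
    (a u b w : V) : R a u b w = ∑ j, ⟪e j, u⟫ * R a (e j) b w := by
  conv_lhs => rw [← e.sum_repr' u]
  simp [map_sum, LinearMap.sum_apply, LinearMap.smul_apply, smul_eq_mul]

lemma expand_last (e : OrthonormalBasis ι ℝ V) (R : V →ₗ[ℝ] V →ₗ[ℝ] V →ₗ[ℝ] V →ₗ[ℝ] ℝ)
    (a u b w : V) : R a u b w = ∑ j, ⟪e j, w⟫ * R a u b (e j) := by
  conv_lhs => rw [← e.sum_repr' w]
  simp [map_sum, LinearMap.smul_apply, smul_eq_mul]

/-- shifting a skew-adjoint operator from the second to the fourth slot -/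
lemma shift (e : OrthonormalBasis ι ℝ V) (R : V →ₗ[ℝ] V →ₗ[ℝ] V →ₗ[ℝ] V →ₗ[ℝ] ℝ)
    (A : V →ₗ[ℝ] V) (hA : ∀ x y : V, ⟪A x, y⟫ = -⟪x, A y⟫) (a b : V) :
    ∑ i, R a (A (e i)) b (e i) = -∑ i, R a (e i) b (A (e i)) := by
  calc ∑ i, R a (A (e i)) b (e i)
      = ∑ i, ∑ j, ⟪e j, A (e i)⟫ * R a (e j) b (e i) :=
        Finset.sum_congr rfl fun i _ => expand_snd e R a (A (e i)) b (e i)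
    _ = ∑ i, ∑ j, -(⟪e i, A (e j)⟫ * R a (e j) b (e i)) := by
        refine Finset.sum_congr rfl fun i _ => Finset.sum_congr rfl fun j _ => ?_
        rw [real_inner_comm (A (e i)) (e j), hA (e i) (e j), neg_mul]
    _ = -∑ j, ∑ i, ⟪e i, A (e j)⟫ * R a (e j) b (e i) := by
        rw [← Finset.sum_neg_distrib, Finset.sum_comm]
        simp [Finset.sum_neg_distrib]
    _ = -∑ j, R a (e j) b (A (e j)) := by
        refine congrArg Neg.neg (Finset.sum_congr rfl fun j _ => ?_)
        exact (expand_last e R a (e j) b (A (e j))).symm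

lemma Ssum_skew (e : OrthonormalBasis ι ℝ V) (R : V →ₗ[ℝ] V →ₗ[ℝ] V →ₗ[ℝ] V →ₗ[ℝ] ℝ)
    (hpair : ∀ x y z u : V, R x y z u = R z u x y)
    (A : V →ₗ[ℝ] V) (hA : ∀ x y : V, ⟪A x, y⟫ = -⟪x, A y⟫) (a b : V) :
    Ssum e R A a b = -Ssum e R A b a := by
  unfold Ssum
  calc ∑ i, R a (e i) b (A (e i))
      = ∑ i, R b (A (e i)) a (e i) :=
        Finset.sum_congr rfl fun i _ => hpair a (e i) b (A (e i))
    _ = -∑ i, R b (e i) a (A (e i)) := shift e R A hA b a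

lemma Ssum_bianchi (e : OrthonormalBasis ι ℝ V) (R : V →ₗ[ℝ] V →ₗ[ℝ] V →ₗ[ℝ] V →ₗ[ℝ] ℝ)
    (hskew1 : ∀ x y z u : V, R x y z u = -R y x z u)
    (hbianchi : ∀ x y z u : V, R x y z u + R y z x u + R z x y u = 0)
    (A : V →ₗ[ℝ] V) (a b : V) :
    Ssum e R A a b - Ssum e R A b a = Csum e R A a b := by
  unfold Ssum Csum
  rw [← Finset.sum_sub_distrib]
  refine Finset.sum_congr rfl fun i _ => ?_
  have h := hbianchi a (e i) b (A (e i))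
  have h1 := hskew1 (e i) b a (A (e i))
  have h2 := hskew1 b a (e i) (A (e i))
  linarith

lemma two_Ssum (e : OrthonormalBasis ι ℝ V) (R : V →ₗ[ℝ] V →ₗ[ℝ] V →ₗ[ℝ] V →ₗ[ℝ] ℝ)
    (hpair : ∀ x y z u : V, R x y z u = R z u x y)
    (hskew1 : ∀ x y z u : V, R x y z u = -R y x z u)
    (hbianchi : ∀ x y z u : V, R x y z u + R y z x u + R z x y u = 0)
    (A : V →ₗ[ℝ] V) (hA : ∀ x y : V, ⟪A x, y⟫ = -⟪x, A y⟫) (a b : V) :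
    2 * Ssum e R A a b = Csum e R A a b := by
  have h1 := Ssum_skew e R hpair A hA a b
  have h2 := Ssum_bianchi e R hskew1 hbianchi A a b
  linarith

lemma Csum_swap (e : OrthonormalBasis ι ℝ V) (R : V →ₗ[ℝ] V →ₗ[ℝ] V →ₗ[ℝ] V →ₗ[ℝ] ℝ)
    (hskew1 : ∀ x y z u : V, R x y z u = -R y x z u)
    (A : V →ₗ[ℝ] V) (a b : V) :
    Csum e R A a b = -Csum e R A b a := by
  unfold Csum
  rw [← Finset.sum_neg_distrib]
  exact Finset.sum_congr rfl fun i _ => hskew1 a b (e i) (A (e i))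

lemma Csum_neg_left (e : OrthonormalBasis ι ℝ V) (R : V →ₗ[ℝ] V →ₗ[ℝ] V →ₗ[ℝ] V →ₗ[ℝ] ℝ)
    (A : V →ₗ[ℝ] V) (a b : V) :
    Csum e R A (-a) b = -Csum e R A a b := by
  unfold Csum
  rw [← Finset.sum_neg_distrib]
  refine Finset.sum_congr rfl fun i _ => ?_
  have h : R (-a) + R a = 0 := by rw [← map_add, neg_add_cancel, map_zero]
  have h2 := congrArg (fun f => f b (e i) (A (e i))) h
  simp only [LinearMap.add_apply, LinearMap.zero_apply] at h2
  linarith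

lemma Csum_neg_right (e : OrthonormalBasis ι ℝ V) (R : V →ₗ[ℝ] V →ₗ[ℝ] V →ₗ[ℝ] V →ₗ[ℝ] ℝ)
    (A : V →ₗ[ℝ] V) (a b : V) :
    Csum e R A a (-b) = -Csum e R A a b := by
  simp [Csum, Finset.sum_neg_distrib]

end Aux

/-- the skew-symmetric part of the q-Ricci tensor satisfies
`Σ_{A=I,J,K} A · (Ric^q)_a = -(Ric^q)_a`, where `(A·b)(x,y) = b(Ax, Ay)`. -/
theorem stmt10 (n : ℕ) (V : Type*) [NormedAddCommGroup V] [InnerProductSpace ℝ V]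
    [FiniteDimensional ℝ V] (hdim : Module.finrank ℝ V = 4 * n)
    (ι : Type*) [Fintype ι] (e : OrthonormalBasis ι ℝ V)
    (I J K : V →ₗ[ℝ] V)
    (hI2 : ∀ x : V, I (I x) = -x) (hJ2 : ∀ x : V, J (J x) = -x)
    (hK : ∀ x : V, K x = I (J x)) (hIJ : ∀ x : V, I (J x) = -J (I x))
    (hIiso : ∀ x y : V, ⟪I x, I y⟫ = ⟪x, y⟫)
    (hJiso : ∀ x y : V, ⟪J x, J y⟫ = ⟪x, y⟫)
    (hKiso : ∀ x y : V, ⟪K x, K y⟫ = ⟪x, y⟫)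
    (R : V →ₗ[ℝ] V →ₗ[ℝ] V →ₗ[ℝ] V →ₗ[ℝ] ℝ)
    (hskew1 : ∀ x y z u : V, R x y z u = -R y x z u)
    (hskew2 : ∀ x y z u : V, R x y z u = -R x y u z)
    (hpair : ∀ x y z u : V, R x y z u = R z u x y)
    (hbianchi : ∀ x y z u : V, R x y z u + R y z x u + R z x y u = 0)
    (Ricq : V → V → ℝ)
    (hRicq : ∀ x y : V, Ricq x y =
      ∑ i, (R x (e i) (I y) (I (e i)) + R x (e i) (J y) (J (e i)) +
            R x (e i) (K y) (K (e i))))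
    (Ricqa : V → V → ℝ)
    (hRicqa : ∀ x y : V, Ricqa x y = (1 / 2 : ℝ) * (Ricq x y - Ricq y x)) :
    ∀ x y : V, Ricqa (I x) (I y) + Ricqa (J x) (J y) + Ricqa (K x) (K y)
      = -Ricqa x y := by
  -- quaternion multiplication facts
  have hIJc : ∀ v : V, I (J v) = K v := fun v => (hK v).symm
  have hJI : ∀ v : V, J (I v) = -K v := by
    intro v; rw [hK v, hIJ v, neg_neg]
  have hJK : ∀ v : V, J (K v) = I v := by
    intro v; rw [hK v, hJI (J v), hK (J v), hJ2 v, map_neg, neg_neg]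
  have hKK : ∀ v : V, K (K v) = -v := by
    intro v; rw [hK (K v), hJK v, hI2 v]
  have hIK : ∀ v : V, I (K v) = -J v := by
    intro v; rw [hK v, hI2 (J v)]
  have hKI : ∀ v : V, K (I v) = J v := by
    intro v; rw [hK (I v), hJI v, map_neg, hIK v, neg_neg]
  have hKJ : ∀ v : V, K (J v) = -I v := by
    intro v; rw [hK (J v), hJ2 v, map_neg]
  -- skew-adjointness of I, J, K
  have hIsk : ∀ x y : V, ⟪I x, y⟫ = -⟪x, I y⟫ := by
    intro x y
    have h := hIiso x (I y)
    rw [hI2 y, inner_neg_right] at h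
    linarith
  have hJsk : ∀ x y : V, ⟪J x, y⟫ = -⟪x, J y⟫ := by
    intro x y
    have h := hJiso x (J y)
    rw [hJ2 y, inner_neg_right] at h
    linarith
  have hKsk : ∀ x y : V, ⟪K x, y⟫ = -⟪x, K y⟫ := by
    intro x y
    have h := hKiso x (K y)
    rw [hKK y, inner_neg_right] at h
    linarith
  -- Ricq in terms of Ssum
  have hRicqS : ∀ x y : V, Ricq x y =
      Ssum e R I x (I y) + Ssum e R J x (J y) + Ssum e R K x (K y) := by
    intro x y
    rw [hRicq x y]
    unfold Ssum
    rw [Finset.sum_add_distrib, Finset.sum_add_distrib]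
  -- the key formula : 4 * Ricqa u v in terms of Csum
  have key : ∀ u v : V, 4 * Ricqa u v =
      Csum e R I u (I v) + Csum e R I (I u) v + Csum e R J u (J v) +
      Csum e R J (J u) v + Csum e R K u (K v) + Csum e R K (K u) v := by
    intro u v
    have h1 := two_Ssum e R hpair hskew1 hbianchi I hIsk u (I v)
    have h2 := two_Ssum e R hpair hskew1 hbianchi J hJsk u (J v)
    have h3 := two_Ssum e R hpair hskew1 hbianchi K hKsk u (K v)
    have h4 := two_Ssum e R hpair hskew1 hbianchi I hIsk v (I u)
    have h5 := two_Ssum e R hpair hskew1 hbianchi J hJsk v (J u)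
    have h6 := two_Ssum e R hpair hskew1 hbianchi K hKsk v (K u)
    have s1 := Csum_swap e R hskew1 I v (I u)
    have s2 := Csum_swap e R hskew1 J v (J u)
    have s3 := Csum_swap e R hskew1 K v (K u)
    rw [hRicqa u v, hRicqS u v, hRicqS v u]
    linarith
  intro x y
  have h1 := key (I x) (I y)
  have h2 := key (J x) (J y)
  have h3 := key (K x) (K y)
  have h0 := key x y
  simp only [hI2, hJ2, hKK, hIJc, hJI, hJK, hIK, hKI, hKJ,
    Csum_neg_left, Csum_neg_right] at h1 h2 h3
  linarith
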